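/- Let G be a directed graph, let g be a bounded graph trace on G (i.e., ‖g‖ := Σ_{v∈G⁰} g(v) < ∞), and suppose every vertex of G lying on a loop is left infinite. Let H := {v ∈ G⁰ : g(v) = 0}. Then the quotient graph G_{(H,∅)} contains no loops. -/

import Mathlib

/-- A directed graph: countable sets of vertices and edges with range and source maps. -/
structure DirGraph where
  V : Type
  E : Type
  countV : Countable V
  countE : Countable E
  r : E → V
  s : E → V

attribute [instance] DirGraph.countV DirGraph.countE

/-- `g : G⁰ → [0,∞)` is a graph trace if (1) for every vertex emitting a finite nonzero
number of edges, `g v = ∑_{s(e)=v} g (r e)`, and (2) for every infinite emitter `v` and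
every finite set of edges emitted by `v`, `∑ g (r eᵢ) ≤ g v`. -/
def DirGraph.IsGraphTrace (G : DirGraph) (g : G.V → NNReal) : Prop :=
  (∀ v : G.V, ({e : G.E | G.s e = v}).Finite → ({e : G.E | G.s e = v}).Nonempty →
      g v = ∑ᶠ e ∈ {e : G.E | G.s e = v}, g (G.r e)) ∧
  (∀ v : G.V, ({e : G.E | G.s e = v}).Infinite →
      ∀ F : Finset G.E, (∀ e ∈ F, G.s e = v) → ∑ e ∈ F, g (G.r e) ≤ g v)

/-- `v ≥ w` : there is a directed path (possibly of length zero) from `v` to `w`. -/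
def DirGraph.Reaches (G : DirGraph) : G.V → G.V → Prop :=
  Relation.ReflTransGen (fun a b => ∃ e : G.E, G.s e = a ∧ G.r e = b)

/-- `L(v)`, the set of vertices that can reach `v`. -/
def DirGraph.L (G : DirGraph) (v : G.V) : Set G.V := {w : G.V | G.Reaches w v}

/-- A vertex is left infinite if `L(v)` is infinite. -/
def DirGraph.LeftInfinite (G : DirGraph) (v : G.V) : Prop := (G.L v).Infinite

/-- A vertex lies on a loop iff there is a directed path of length at least one
from it back to itself. -/
def DirGraph.OnLoop (G : DirGraph) (v : G.V) : Prop :=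
  ∃ e : G.E, G.s e = v ∧ G.Reaches (G.r e) v

/-- A set of vertices is hereditary if it is closed under ranges of edges. -/
def DirGraph.Hereditary (G : DirGraph) (H : Set G.V) : Prop :=
  ∀ e : G.E, G.s e ∈ H → G.r e ∈ H

/-- A set of vertices is saturated if it contains every vertex emitting a finite
nonzero number of edges all of whose ranges lie in the set. -/
def DirGraph.Saturated (G : DirGraph) (H : Set G.V) : Prop :=
  ∀ v : G.V, ({e : G.E | G.s e = v}).Finite → ({e : G.E | G.s e = v}).Nonempty →
    (∀ e : G.E, G.s e = v → G.r e ∈ H) → v ∈ H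

/-- The norm `‖g‖ = ∑_{v} g v` of a function on the vertices, as an extended real. -/
noncomputable def DirGraph.traceNorm (G : DirGraph) (g : G.V → NNReal) : ENNReal :=
  ∑' v : G.V, (g v : ENNReal)


/-- The set `B_H` of infinite emitters `v` such that a finite, nonzero number of edges
from `v` have range outside `H`. -/
def DirGraph.BH (G : DirGraph) (H : Set G.V) : Set G.V :=
  {v : G.V | ({e : G.E | G.s e = v}).Infinite ∧
    ({e : G.E | G.s e = v ∧ G.r e ∉ H}).Finite ∧
    ({e : G.E | G.s e = v ∧ G.r e ∉ H}).Nonempty}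

/-- The quotient graph `G_{(H,∅)}` for a hereditary set `H`:  its vertices are the
vertices of `G` outside `H` together with a primed copy `v'` of each `v ∈ B_H`, and its
edges are the edges of `G` with range outside `H` together with a primed copy `e'` of
each edge with range in `B_H`; a primed edge `e'` has source `s e` and range `(r e)'`. -/
def DirGraph.quot (G : DirGraph) (H : Set G.V) (hH : G.Hereditary H) : DirGraph where
  V := {v : G.V // v ∉ H} ⊕ {v : G.V // v ∈ G.BH H}
  E := {e : G.E // G.r e ∉ H} ⊕ {e : G.E // G.r e ∈ G.BH H}
  countV := inferInstance
  countE := inferInstance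
  r := Sum.elim (fun e => Sum.inl ⟨G.r e.1, e.2⟩) (fun e => Sum.inr ⟨G.r e.1, e.2⟩)
  s := Sum.elim
    (fun e => Sum.inl ⟨G.s e.1, fun hs => e.2 (hH e.1 hs)⟩)
    (fun e => Sum.inl ⟨G.s e.1, fun hs => by
      obtain ⟨f, hf, hrf⟩ := e.2.2.2
      exact hrf (hH f (hf ▸ hH e.1 hs))⟩)

open scoped Classical in
/-- The function `g̃` induced on the vertices of the quotient graph `G_{(H,∅)}` by a
function `g` on the vertices of `G`:  it is `g w` on unprimed vertices outside `B_H`,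
`∑_{s(e) = w, r(e) ∉ H} g (r e)` on unprimed vertices of `B_H`, and
`g v - ∑_{s(e) = v, r(e) ∉ H} g (r e)` on the primed copy `v'` of `v ∈ B_H`. -/
noncomputable def DirGraph.gtilde (G : DirGraph) (H : Set G.V) (hH : G.Hereditary H)
    (g : G.V → NNReal) : (G.quot H hH).V → NNReal :=
  Sum.elim
    (fun w => if w.1 ∈ G.BH H then
        ∑ᶠ e ∈ {e : G.E | G.s e = w.1 ∧ G.r e ∉ H}, g (G.r e)
      else g w.1)
    (fun v => g v.1 - ∑ᶠ e ∈ {e : G.E | G.s e = v.1 ∧ G.r e ∉ H}, g (G.r e))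

theorem DirGraph.edge_le (G : DirGraph) (g : G.V → NNReal) (hg : G.IsGraphTrace g)
    (e : G.E) : g (G.r e) ≤ g (G.s e) := by
  by_cases hfin : ({e' : G.E | G.s e' = G.s e}).Finite
  · rw [hg.1 (G.s e) hfin ⟨e, rfl⟩]
    have h1 : ∑ᶠ e' ∈ {e' : G.E | G.s e' = G.s e}, g (G.r e')
        = ∑ e' ∈ hfin.toFinset, g (G.r e') := by
      rw [← finsum_mem_coe_finset, hfin.coe_toFinset]
    rw [h1]
    exact Finset.single_le_sum (f := fun e' => g (G.r e')) (fun _ _ => zero_le) (hfin.mem_toFinset.mpr rfl)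
  · have h := hg.2 (G.s e) hfin {e} (by simp)
    simpa using h

theorem DirGraph.reach_le (G : DirGraph) (g : G.V → NNReal) (hg : G.IsGraphTrace g)
    {w v : G.V} (h : G.Reaches w v) : g v ≤ g w := by
  induction h with
  | refl => exact le_rfl
  | tail _ step ih =>
      obtain ⟨e, hs, hr⟩ := step
      calc g _ = g (G.r e) := by rw [hr]
        _ ≤ g (G.s e) := G.edge_le g hg e
        _ = g _ := by rw [hs]
        _ ≤ _ := ih

theorem DirGraph.no_loop_of_ne_zero (G : DirGraph) (g : G.V → NNReal)
    (hg : G.IsGraphTrace g) (hbdd : G.traceNorm g < ⊤)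
    (hloops : ∀ v : G.V, G.OnLoop v → G.LeftInfinite v)
    (v : G.V) (hv : g v ≠ 0) : ¬ G.OnLoop v := by
  intro hloop
  have hinf : (G.L v).Infinite := hloops v hloop
  have : Infinite ↥(G.L v) := hinf.to_subtype
  have htop : (⊤ : ENNReal) ≤ G.traceNorm g := by
    calc (⊤ : ENNReal) = ∑' _ : ↥(G.L v), (g v : ENNReal) :=
          (ENNReal.tsum_const_eq_top_of_ne_zero (by exact_mod_cast hv)).symm
      _ ≤ ∑' w : ↥(G.L v), (g w.1 : ENNReal) := by
          refine ENNReal.tsum_le_tsum fun w => ?_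
          exact_mod_cast G.reach_le g hg w.2
      _ ≤ ∑' w : G.V, (g w : ENNReal) :=
          ENNReal.tsum_comp_le_tsum_of_injective Subtype.val_injective _
  exact absurd hbdd (not_lt.mpr htop)

/-- If `g` is a bounded graph trace on `G`, every vertex of `G` lying on a loop is left
infinite, and `H = {v : g v = 0}`, then the quotient graph `G_{(H,∅)}` has no loops. -/
theorem quot_no_loops (G : DirGraph) (g : G.V → NNReal)
    (hg : G.IsGraphTrace g) (hbdd : G.traceNorm g < ⊤)
    (hloops : ∀ v : G.V, G.OnLoop v → G.LeftInfinite v) :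
    ∃ hH : G.Hereditary {v : G.V | g v = 0},
      ∀ v : (G.quot {v : G.V | g v = 0} hH).V,
        ¬ (G.quot {v : G.V | g v = 0} hH).OnLoop v := by
  set H : Set G.V := {v : G.V | g v = 0} with hHdef
  have hH : G.Hereditary H := by
    intro e he
    have : g (G.r e) ≤ g (G.s e) := G.edge_le g hg e
    have h0 : g (G.s e) = 0 := he
    simpa [hHdef, Set.mem_setOf_eq] using le_antisymm (h0 ▸ this) (zero_le)
  refine ⟨hH, ?_⟩
  set Q := G.quot H hH with hQ
  -- projection maps
  let toE : Q.E → G.E := Sum.elim Subtype.val Subtype.val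
  let toV : Q.V → G.V := Sum.elim Subtype.val Subtype.val
  have hs' : ∀ e' : Q.E, G.s (toE e') = toV (Q.s e') := by
    rintro (e | e) <;> rfl
  have hr' : ∀ e' : Q.E, G.r (toE e') = toV (Q.r e') := by
    rintro (e | e) <;> rfl
  have hreach : ∀ a b : Q.V, Q.Reaches a b → G.Reaches (toV a) (toV b) := by
    intro a b h
    induction h with
    | refl => exact Relation.ReflTransGen.refl
    | tail _ step ih =>
        obtain ⟨e', he1, he2⟩ := step
        exact ih.tail ⟨toE e', by rw [hs', he1], by rw [hr', he2]⟩
  have hsne : ∀ e' : Q.E, g (G.s (toE e')) ≠ 0 := by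
    rintro (e | e) h0
    · have h0' : g (G.s e.1) = 0 := h0
      have : g (G.r e.1) ≤ g (G.s e.1) := G.edge_le g hg e.1
      rw [h0'] at this
      exact e.2 (le_antisymm this (zero_le))
    · obtain ⟨-, -, f, hfs, hfr⟩ := e.2
      have h1 : g (G.r f) ≤ g (G.s f) := G.edge_le g hg f
      have h0' : g (G.s e.1) = 0 := h0
      have h2 : g (G.r e.1) ≤ g (G.s e.1) := G.edge_le g hg e.1
      rw [h0'] at h2
      have h3 : g (G.r e.1) = 0 := le_antisymm h2 (zero_le)
      rw [hfs, h3] at h1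
      exact hfr (le_antisymm h1 (zero_le))
  intro q hq
  obtain ⟨e', hse, hre⟩ := hq
  have hv : g (toV q) ≠ 0 := by
    rw [← hse, ← hs']
    exact hsne e'
  have honloop : G.OnLoop (toV q) := by
    refine ⟨toE e', ?_, ?_⟩
    · rw [hs', hse]
    · rw [hr']
      exact hreach _ _ hre
  exact G.no_loop_of_ne_zero g hg hbdd hloops (toV q) hv honloop
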